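/- Subset structure of optimal assignments: for any finite set C of bidders and any j with 1 ≤ j ≤ |C|, and any S that is an optimal assignment of j−1 slots from C, there exists an optimal assignment S' of j slots from C such that the set of bidders in S' strictly contains the set of bidders in S. -/

import Mathlib

noncomputable section

/-- Efficiency of an ordered list of ads `(e, q)`. -/
def eff : List (ℝ × ℝ) → ℝ
  | [] => 0
  | a :: L => a.1 + a.2 * eff L

/-- Product of continuation probabilities of a list of ads. -/
def qprod (L : List (ℝ × ℝ)) : ℝ := (L.map Prod.snd).prod

namespace SubsetAux

def rho (a : ℝ × ℝ) : ℝ := a.1 / (1 - a.2)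

def GoodL (L : List (ℝ × ℝ)) : Prop := ∀ a ∈ L, 0 < a.1 ∧ 0 < a.2 ∧ a.2 < 1

@[simp] lemma eff_nil : eff [] = 0 := rfl
@[simp] lemma eff_cons (a : ℝ × ℝ) (L : List (ℝ × ℝ)) : eff (a :: L) = a.1 + a.2 * eff L := rfl
@[simp] lemma qprod_nil : qprod [] = 1 := by simp [qprod]
@[simp] lemma qprod_cons (a : ℝ × ℝ) (L : List (ℝ × ℝ)) :
    qprod (a :: L) = a.2 * qprod L := by simp [qprod]

lemma qprod_append (L M : List (ℝ × ℝ)) : qprod (L ++ M) = qprod L * qprod M := by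
  simp [qprod, List.prod_append]

lemma eff_append (L M : List (ℝ × ℝ)) : eff (L ++ M) = eff L + qprod L * eff M := by
  induction L with
  | nil => simp
  | cons a L ih => simp [ih]; ring

lemma qprod_pos {L : List (ℝ × ℝ)} (h : GoodL L) : 0 < qprod L := by
  induction L with
  | nil => simp
  | cons a L ih =>
    have ha := h a (by simp)
    have : GoodL L := fun x hx => h x (by simp [hx])
    simp only [qprod_cons]
    exact mul_pos ha.2.1 (ih this)

lemma qprod_le_one {L : List (ℝ × ℝ)} (h : GoodL L) : qprod L ≤ 1 := by
  induction L with
  | nil => simp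
  | cons a L ih =>
    have ha := h a (by simp)
    have hL : GoodL L := fun x hx => h x (by simp [hx])
    have h1 := qprod_pos hL
    simp only [qprod_cons]
    nlinarith [ih hL, ha.2.1, ha.2.2]

lemma eff_nonneg {L : List (ℝ × ℝ)} (h : GoodL L) : 0 ≤ eff L := by
  induction L with
  | nil => simp
  | cons a L ih =>
    have ha := h a (by simp)
    have hL : GoodL L := fun x hx => h x (by simp [hx])
    have := ih hL
    simp only [eff_cons]
    nlinarith [ha.1, ha.2.1]

lemma rho_pos {a : ℝ × ℝ} (h : 0 < a.1 ∧ 0 < a.2 ∧ a.2 < 1) : 0 < rho a :=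
  div_pos h.1 (by linarith [h.2.2])

lemma e_eq {a : ℝ × ℝ} (h : 0 < a.1 ∧ 0 < a.2 ∧ a.2 < 1) : a.1 = (1 - a.2) * rho a := by
  have : (1:ℝ) - a.2 ≠ 0 := by linarith [h.2.2]
  rw [rho]; field_simp

/-- key upper bound: eff X + qprod X * r ≤ m if all rhos ≤ m and r ≤ m -/
lemma eff_qprod_le {X : List (ℝ × ℝ)} {m r : ℝ} (hg : GoodL X)
    (hb : ∀ x ∈ X, rho x ≤ m) (hr : r ≤ m) : eff X + qprod X * r ≤ m := by
  induction X with
  | nil => simpa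
  | cons x X ih =>
    have hx := hg x (by simp)
    have hgX : GoodL X := fun y hy => hg y (by simp [hy])
    have hbX : ∀ y ∈ X, rho y ≤ m := fun y hy => hb y (by simp [hy])
    have hm := ih hgX hbX
    have hxm : rho x ≤ m := hb x (by simp)
    have he : x.1 = (1 - x.2) * rho x := e_eq hx
    simp only [eff_cons, qprod_cons]
    have h2 : x.2 * (eff X + qprod X * r) ≤ x.2 * m :=
      mul_le_mul_of_nonneg_left hm (le_of_lt hx.2.1)
    nlinarith [hx.2.1, hx.2.2]


open List Finset

def ins (a : ℝ × ℝ) : List (ℝ × ℝ) → List (ℝ × ℝ)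
  | [] => [a]
  | b :: M => if rho b < rho a then a :: b :: M else b :: ins a M

def sortL : List (ℝ × ℝ) → List (ℝ × ℝ)
  | [] => []
  | a :: L => ins a (sortL L)

def SortedR (L : List (ℝ × ℝ)) : Prop := L.Pairwise (fun x y => rho y < rho x)

lemma ins_perm (a : ℝ × ℝ) (M : List (ℝ × ℝ)) : ins a M ~ a :: M := by
  induction M with
  | nil => simp [ins]
  | cons b M ih =>
    by_cases h : rho b < rho a
    · simp [ins, h]
    · simp only [ins, if_neg h]
      exact ((ih.cons b).trans (List.Perm.swap a b M))

lemma sortL_perm (L : List (ℝ × ℝ)) : sortL L ~ L := by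
  induction L with
  | nil => simp [sortL]
  | cons a L ih => exact (ins_perm a (sortL L)).trans (ih.cons a)

lemma swap_le {a b : ℝ × ℝ} (ha : 0 < a.1 ∧ 0 < a.2 ∧ a.2 < 1)
    (hb : 0 < b.1 ∧ 0 < b.2 ∧ b.2 < 1) (hr : rho a ≤ rho b) (X : ℝ) :
    a.1 + a.2 * (b.1 + b.2 * X) ≤ b.1 + b.2 * (a.1 + a.2 * X) := by
  have h1 : a.1 * (1 - b.2) ≤ b.1 * (1 - a.2) := by
    rw [e_eq ha, e_eq hb]
    have h2 : (0:ℝ) < 1 - a.2 := by linarith [ha.2.2]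
    have h3 : (0:ℝ) < 1 - b.2 := by linarith [hb.2.2]
    have h4 : rho a * ((1 - a.2) * (1 - b.2)) ≤ rho b * ((1 - a.2) * (1 - b.2)) :=
      mul_le_mul_of_nonneg_right hr (by positivity)
    nlinarith [h4]
  nlinarith

lemma eff_cons_le_ins {a : ℝ × ℝ} {M : List (ℝ × ℝ)} (hg : GoodL (a :: M)) :
    eff (a :: M) ≤ eff (ins a M) := by
  induction M with
  | nil => simp [ins]
  | cons b M ih =>
    have ha := hg a (by simp)
    have hb := hg b (by simp)
    by_cases h : rho b < rho a
    · simp [ins, h]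
    · simp only [ins, if_neg h]
      have h1 : eff (a :: b :: M) ≤ eff (b :: a :: M) := by
        simp only [eff_cons]
        exact swap_le ha hb (not_lt.mp h) (eff M)
      have h2 : eff (a :: M) ≤ eff (ins a M) := by
        apply ih
        intro x hx
        rcases List.mem_cons.mp hx with h' | h'
        · exact h' ▸ ha
        · exact hg x (by simp [h'])
      calc eff (a :: b :: M) ≤ eff (b :: a :: M) := h1
        _ = b.1 + b.2 * eff (a :: M) := rfl
        _ ≤ b.1 + b.2 * eff (ins a M) := by nlinarith [hb.2.1]

lemma eff_le_sortL {L : List (ℝ × ℝ)} (hg : GoodL L) : eff L ≤ eff (sortL L) := by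
  induction L with
  | nil => simp [sortL]
  | cons a L ih =>
    have ha := hg a (by simp)
    have hgL : GoodL L := fun x hx => hg x (by simp [hx])
    have h1 : eff (a :: L) ≤ eff (a :: sortL L) := by
      simp only [eff_cons]
      nlinarith [ih hgL, ha.2.1]
    refine h1.trans (eff_cons_le_ins ?_)
    intro x hx
    rcases List.mem_cons.mp hx with h' | h'
    · exact h' ▸ ha
    · exact hgL x ((sortL_perm L).mem_iff.mp h')

lemma mem_ins {x a : ℝ × ℝ} {M : List (ℝ × ℝ)} : x ∈ ins a M ↔ x = a ∨ x ∈ M := by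
  rw [(ins_perm a M).mem_iff]; simp

lemma ins_sorted {a : ℝ × ℝ} {M : List (ℝ × ℝ)} (hs : SortedR M)
    (hne : ∀ y ∈ M, rho y ≠ rho a) : SortedR (ins a M) := by
  induction M with
  | nil => simp [ins, SortedR]
  | cons b M ih =>
    have hsM : SortedR M := hs.of_cons
    have hb := List.pairwise_cons.mp hs
    by_cases h : rho b < rho a
    · simp only [ins, if_pos h]
      refine List.pairwise_cons.mpr ⟨?_, hs⟩
      intro y hy
      rcases List.mem_cons.mp hy with h' | h'
      · exact h' ▸ h
      · exact lt_trans (hb.1 y h') h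
    · simp only [ins, if_neg h]
      have hab : rho a < rho b := lt_of_le_of_ne (not_lt.mp h) (Ne.symm (hne b (by simp)))
      refine List.pairwise_cons.mpr ⟨?_, ih hsM (fun y hy => hne y (by simp [hy]))⟩
      intro y hy
      rcases mem_ins.mp hy with h' | h'
      · exact h' ▸ hab
      · exact hb.1 y h'

lemma sortL_sorted {L : List (ℝ × ℝ)} (hd : L.Pairwise (fun x y => rho x ≠ rho y)) :
    SortedR (sortL L) := by
  induction L with
  | nil => simp [sortL, SortedR]
  | cons a L ih =>
    have hdL := hd.of_cons
    have ha := List.pairwise_cons.mp hd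
    refine ins_sorted (ih hdL) ?_
    intro y hy
    exact fun he => (ha.1 y ((sortL_perm L).mem_iff.mp hy)) he.symm

lemma sorted_eq_of_perm : ∀ {L M : List (ℝ × ℝ)}, L ~ M → SortedR L → SortedR M → L = M := by
  intro L
  induction L with
  | nil => intro M h _ _; simpa using h.nil_eq
  | cons a L ih =>
    intro M hp hL hM
    cases M with
    | nil => exact absurd hp.symm (by simp)
    | cons b M =>
      have hab : a = b := by
        by_contra hne
        have haM : a ∈ b :: M := hp.mem_iff.mp (by simp)
        have hbL : b ∈ a :: L := hp.mem_iff.mpr (by simp)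
        have h1 : a ∈ M := by rcases List.mem_cons.mp haM with h | h; exact absurd h hne; exact h
        have h2 : b ∈ L := by
          rcases List.mem_cons.mp hbL with h | h; exact absurd h.symm hne; exact h
        have hb1 := (List.pairwise_cons.mp hM).1 a h1
        have ha1 := (List.pairwise_cons.mp hL).1 b h2
        exact absurd (lt_trans hb1 ha1) (lt_irrefl _)
      subst hab
      have := ih (hp.cons_inv) hL.of_cons hM.of_cons
      rw [this]


def Dist (C : Finset (ℝ × ℝ)) : Prop := ∀ a ∈ C, ∀ b ∈ C, a.1 / (1 - a.2) = b.1 / (1 - b.2) → a = b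
def Good (C : Finset (ℝ × ℝ)) : Prop := ∀ a ∈ C, 0 < a.1 ∧ 0 < a.2 ∧ a.2 < 1

lemma rho_inj {C : Finset (ℝ × ℝ)} (hd : Dist C) {a b : ℝ × ℝ} (ha : a ∈ C) (hb : b ∈ C)
    (h : rho a = rho b) : a = b := hd a ha b hb h

lemma rho_ne {C : Finset (ℝ × ℝ)} (hd : Dist C) {a b : ℝ × ℝ} (ha : a ∈ C) (hb : b ∈ C)
    (h : a ≠ b) : rho a ≠ rho b := fun he => h (rho_inj hd ha hb he)

lemma pairwise_rho_ne {C : Finset (ℝ × ℝ)} (hd : Dist C) {L : List (ℝ × ℝ)}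
    (hmem : ∀ x ∈ L, x ∈ C) (hnd : L.Nodup) : L.Pairwise (fun x y => rho x ≠ rho y) := by
  induction L with
  | nil => simp
  | cons a L ih =>
    rw [List.pairwise_cons]
    refine ⟨fun y hy => rho_ne hd (hmem a (by simp)) (hmem y (by simp [hy]))
      (fun he => (List.nodup_cons.mp hnd).1 (he ▸ hy)), ?_⟩
    exact ih (fun x hx => hmem x (by simp [hx])) (List.nodup_cons.mp hnd).2

def sortF (A : Finset (ℝ × ℝ)) : List (ℝ × ℝ) := sortL A.toList
def Fv (A : Finset (ℝ × ℝ)) : ℝ := eff (sortF A)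

lemma sortF_perm (A : Finset (ℝ × ℝ)) : sortF A ~ A.toList := sortL_perm _
lemma mem_sortF {x : ℝ × ℝ} {A : Finset (ℝ × ℝ)} : x ∈ sortF A ↔ x ∈ A := by
  rw [(sortF_perm A).mem_iff, Finset.mem_toList]
lemma sortF_nodup (A : Finset (ℝ × ℝ)) : (sortF A).Nodup :=
  (sortF_perm A).nodup_iff.mpr A.nodup_toList
lemma length_sortF (A : Finset (ℝ × ℝ)) : (sortF A).length = A.card := by
  rw [(sortF_perm A).length_eq, Finset.length_toList]
lemma toFinset_sortF (A : Finset (ℝ × ℝ)) : (sortF A).toFinset = A := by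
  ext x; rw [List.mem_toFinset, mem_sortF]
lemma goodL_sortF {C A : Finset (ℝ × ℝ)} (hC : Good C) (hA : A ⊆ C) : GoodL (sortF A) :=
  fun x hx => hC x (hA (mem_sortF.mp hx))
lemma sortF_sorted {C A : Finset (ℝ × ℝ)} (hd : Dist C) (hA : A ⊆ C) : SortedR (sortF A) :=
  sortL_sorted (pairwise_rho_ne hd (fun x hx => hA (Finset.mem_toList.mp hx)) A.nodup_toList)

lemma Fv_eq_eff {C A : Finset (ℝ × ℝ)} (hd : Dist C) (hA : A ⊆ C) {M : List (ℝ × ℝ)}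
    (hM : SortedR M) (hperm : M ~ A.toList) : Fv A = eff M := by
  rw [Fv, sorted_eq_of_perm ((sortF_perm A).trans hperm.symm) (sortF_sorted hd hA) hM]

lemma eff_le_Fv {C : Finset (ℝ × ℝ)} (hC : Good C) (hd : Dist C) {L : List (ℝ × ℝ)}
    (hmem : ∀ x ∈ L, x ∈ C) (hnd : L.Nodup) : eff L ≤ Fv L.toFinset := by
  have hgl : GoodL L := fun x hx => hC x (hmem x hx)
  have h1 : eff L ≤ eff (sortL L) := eff_le_sortL hgl
  have hsub : L.toFinset ⊆ C := fun x hx => hmem x (List.mem_toFinset.mp hx)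
  have h2 : sortL L = sortF L.toFinset := by
    apply sorted_eq_of_perm _ (sortL_sorted (pairwise_rho_ne hd hmem hnd))
      (sortF_sorted hd hsub)
    exact (sortL_perm L).trans
      (List.perm_of_nodup_nodup_toFinset_eq hnd (sortF_nodup _)
        (by rw [toFinset_sortF]))
  rw [Fv, ← h2]; exact h1

lemma sortF_split {C A₁ A₂ : Finset (ℝ × ℝ)} (hd : Dist C) (h1 : A₁ ⊆ C) (h2 : A₂ ⊆ C)
    (hlt : ∀ x ∈ A₁, ∀ y ∈ A₂, rho y < rho x) :
    sortF (A₁ ∪ A₂) = sortF A₁ ++ sortF A₂ := by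
  have hdisj : Disjoint A₁ A₂ := by
    rw [Finset.disjoint_left]
    intro x hx1 hx2
    exact absurd (hlt x hx1 x hx2) (lt_irrefl _)
  have hnd : (sortF A₁ ++ sortF A₂).Nodup := by
    rw [List.nodup_append]
    refine ⟨sortF_nodup _, sortF_nodup _, ?_⟩
    intro x hx y hx2 hxy
    subst hxy
    exact absurd (hlt x (mem_sortF.mp hx) x (mem_sortF.mp hx2)) (lt_irrefl _)
  have hsorted : SortedR (sortF A₁ ++ sortF A₂) := by
    rw [SortedR, List.pairwise_append]
    exact ⟨sortF_sorted hd h1, sortF_sorted hd h2,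
      fun x hx y hy => hlt x (mem_sortF.mp hx) y (mem_sortF.mp hy)⟩
  apply sorted_eq_of_perm _ (sortF_sorted hd (Finset.union_subset h1 h2)) hsorted
  apply (sortF_perm _).trans
  apply List.perm_of_nodup_nodup_toFinset_eq (Finset.nodup_toList _) hnd
  rw [Finset.toList_toFinset, List.toFinset_append, toFinset_sortF, toFinset_sortF]

lemma sortF_singleton (a : ℝ × ℝ) : sortF {a} = [a] := by
  simp [sortF, Finset.toList_singleton, sortL, ins]

lemma sortF_insert_max {C A : Finset (ℝ × ℝ)} (hd : Dist C) (hA : A ⊆ C) {a : ℝ × ℝ}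
    (haC : a ∈ C) (hnotin : a ∉ A) (hmax : ∀ x ∈ A, rho x < rho a) :
    sortF (insert a A) = a :: sortF A := by
  have hsorted : SortedR (a :: sortF A) := by
    rw [SortedR, List.pairwise_cons]
    exact ⟨fun y hy => hmax y (mem_sortF.mp hy), sortF_sorted hd hA⟩
  apply sorted_eq_of_perm _ (sortF_sorted hd (Finset.insert_subset haC hA)) hsorted
  exact (sortF_perm _).trans ((Finset.toList_insert hnotin).trans ((sortF_perm A).symm.cons a))

def OptF (U : Finset (ℝ × ℝ)) (k : ℕ) (A : Finset (ℝ × ℝ)) : Prop :=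
  A ⊆ U ∧ A.card = k ∧ ∀ B ⊆ U, B.card = k → Fv B ≤ Fv A

lemma exists_optF (U : Finset (ℝ × ℝ)) (k : ℕ) (h : k ≤ U.card) : ∃ A, OptF U k A := by
  obtain ⟨A, hA, hmax⟩ := Finset.exists_max_image (U.powersetCard k) Fv
    (Finset.powersetCard_nonempty.mpr h)
  rw [Finset.mem_powersetCard] at hA
  exact ⟨A, hA.1, hA.2, fun B hB hBc =>
    hmax B (Finset.mem_powersetCard.mpr ⟨hB, hBc⟩)⟩


/-- split a sorted list at a pivot value -/
lemma split_at {L : List (ℝ × ℝ)} (hs : SortedR L) (r : ℝ) (hne : ∀ x ∈ L, rho x ≠ r) :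
    ∃ A D, L = A ++ D ∧ (∀ x ∈ A, r < rho x) ∧ (∀ x ∈ D, rho x < r) := by
  induction L with
  | nil => exact ⟨[], [], by simp, by simp, by simp⟩
  | cons x L ih =>
    have hx := hne x (by simp)
    have hsL : SortedR L := hs.of_cons
    rcases lt_or_gt_of_ne hx with hlt | hgt
    · refine ⟨[], x :: L, by simp, by simp, ?_⟩
      intro y hy
      rcases List.mem_cons.mp hy with h | h
      · exact h ▸ hlt
      · exact lt_trans ((List.pairwise_cons.mp hs).1 y h) hlt
    · obtain ⟨A, D, hLD, hA, hD⟩ := ih hsL (fun y hy => hne y (by simp [hy]))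
      refine ⟨x :: A, D, by simp [hLD], ?_, hD⟩
      intro y hy
      rcases List.mem_cons.mp hy with h | h
      · exact h ▸ hgt
      · exact hA y h


lemma arith {qa qc E W U σ ea : ℝ} (hqc1 : 0 ≤ qc)
    (hE : E = ea - (1 - qa) * σ) (k1 : U ≤ E) (k2 : (1 - qa) * W ≤ (1 - qc) * E) :
    σ + W + qc * U ≤ ea + qa * (σ + W) := by
  have k3 : qc * U ≤ qc * E := mul_le_mul_of_nonneg_left k1 hqc1
  have k4 : qc * E ≤ E - (1 - qa) * W := by linarith [k2]
  linarith [k3, k4, hE]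

/-- KEY algebraic lemma -/
lemma key_lemma {A B D : List (ℝ × ℝ)} {a c d : ℝ × ℝ}
    (hgA : GoodL A) (hgB : GoodL B)
    (ha : 0 < a.1 ∧ 0 < a.2 ∧ a.2 < 1) (hc : 0 < c.1 ∧ 0 < c.2 ∧ c.2 < 1)
    (hbA : ∀ x ∈ A, rho x ≤ rho a) (hbc : rho c ≤ rho a)
    (hO1 : eff (A ++ (B ++ (d :: D))) ≤ a.1 + a.2 * eff (A ++ (B ++ D))) :
    eff (A ++ (c :: (B ++ (d :: D)))) ≤ a.1 + a.2 * eff (A ++ (c :: (B ++ D))) := by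
  have hα : eff A = eff A := rfl
  set α := eff A with hα2
  set P := qprod A with hP
  set β := eff B with hβ
  set Q := qprod B with hQ
  set δ := eff D with hδ
  have e1 : eff (A ++ (B ++ (d :: D))) = α + P * (β + Q * (d.1 + d.2 * δ)) := by
    rw [eff_append, eff_append, eff_cons]
  have e2 : eff (A ++ (B ++ D)) = α + P * (β + Q * δ) := by
    rw [eff_append, eff_append]
  have e3 : eff (A ++ (c :: (B ++ (d :: D)))) =
      α + P * (c.1 + c.2 * (β + Q * (d.1 + d.2 * δ))) := by
    rw [eff_append, eff_cons, eff_append, eff_cons]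
  have e4 : eff (A ++ (c :: (B ++ D))) = α + P * (c.1 + c.2 * (β + Q * δ)) := by
    rw [eff_append, eff_cons, eff_append]
  rw [e1, e2] at hO1
  rw [e3, e4]
  have hLup : α + P * rho c ≤ rho a := eff_qprod_le hgA hbA hbc
  have hea : a.1 = (1 - a.2) * rho a := e_eq ha
  have hec : c.1 = (1 - c.2) * rho c := e_eq hc
  have h1a : (0:ℝ) < 1 - a.2 := by linarith [ha.2.2]
  have h1c : (0:ℝ) < 1 - c.2 := by linarith [hc.2.2]
  have h6 : rho c * (1 - c.2) = c.1 := by rw [hec]; ring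
  have h7 : rho a * (1 - a.2) = a.1 := by rw [hea]; ring
  have h5 : (α + P * rho c) * ((1 - a.2) * (1 - c.2)) ≤ rho a * ((1 - a.2) * (1 - c.2)) :=
    mul_le_mul_of_nonneg_right hLup (by positivity)
  have l : (α + P * rho c) * ((1 - a.2) * (1 - c.2)) =
      α * ((1 - a.2) * (1 - c.2)) + P * c.1 * (1 - a.2) := by
    linear_combination (P * (1 - a.2)) * h6
  have r : rho a * ((1 - a.2) * (1 - c.2)) = a.1 * (1 - c.2) := by
    linear_combination (1 - c.2) * h7
  rw [l, r] at h5
  -- now apply arith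
  have goal_eq1 : α + P * (c.1 + c.2 * (β + Q * (d.1 + d.2 * δ))) =
      (α + P * (β + Q * δ)) + (P * c.1 - (1 - c.2) * (P * (β + Q * δ)))
        + c.2 * (P * Q * (d.1 + d.2 * δ - δ)) := by ring
  have goal_eq2 : α + P * (c.1 + c.2 * (β + Q * δ)) =
      (α + P * (β + Q * δ)) + (P * c.1 - (1 - c.2) * (P * (β + Q * δ))) := by ring
  rw [goal_eq1, goal_eq2]
  apply arith (hc.2.1.le)
    (E := a.1 - (1 - a.2) * (α + P * (β + Q * δ))) rfl
  · linarith [hO1]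
  · linarith [h5]

lemma good_subset {C C' : Finset (ℝ × ℝ)} (hC : Good C) (h : C' ⊆ C) : Good C' :=
  fun a ha => hC a (h ha)
lemma dist_subset {C C' : Finset (ℝ × ℝ)} (hd : Dist C) (h : C' ⊆ C) : Dist C' :=
  fun a ha b hb => hd a (h ha) b (h hb)

lemma cons_le_Fv {C : Finset (ℝ × ℝ)} (hC : Good C) (hd : Dist C) {u : ℝ × ℝ}
    {Y : Finset (ℝ × ℝ)} (huC : u ∈ C) (hY : Y ⊆ C) (huY : u ∉ Y) :
    u.1 + u.2 * Fv Y ≤ Fv (insert u Y) := by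
  have hlist : eff (u :: sortF Y) ≤ Fv ((u :: sortF Y).toFinset) := by
    apply eff_le_Fv hC hd
    · intro x hx
      rcases List.mem_cons.mp hx with h | h
      · exact h ▸ huC
      · exact hY (mem_sortF.mp h)
    · exact List.nodup_cons.mpr ⟨fun h => huY (mem_sortF.mp h), sortF_nodup Y⟩
  have htf : (u :: sortF Y).toFinset = insert u Y := by
    rw [List.toFinset_cons, toFinset_sortF]
  rw [htf] at hlist
  simpa [Fv] using hlist

lemma Fv_insert_max {C A : Finset (ℝ × ℝ)} (hd : Dist C) (hA : A ⊆ C) {a : ℝ × ℝ}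
    (haC : a ∈ C) (hna : a ∉ A) (hmax : ∀ x ∈ A, rho x < rho a) :
    Fv (insert a A) = a.1 + a.2 * Fv A := by
  rw [Fv, sortF_insert_max hd hA haC hna hmax, eff_cons, Fv]

lemma opt_erase {C : Finset (ℝ × ℝ)} (hC : Good C) (hd : Dist C) {j : ℕ}
    {A : Finset (ℝ × ℝ)} {u : ℝ × ℝ} (hopt : OptF C (j + 1) A) (huA : u ∈ A)
    (humax : ∀ x ∈ A, x ≠ u → rho x < rho u) :
    OptF (C.erase u) j (A.erase u) ∧ Fv A = u.1 + u.2 * Fv (A.erase u) := by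
  obtain ⟨hAC, hAcard, hAopt⟩ := hopt
  have huC := hAC huA
  have hu' := hC u huC
  have hAe_sub : A.erase u ⊆ C.erase u := Finset.erase_subset_erase _ hAC
  have hAeC : A.erase u ⊆ C := (Finset.erase_subset _ _).trans hAC
  have hfv : Fv A = u.1 + u.2 * Fv (A.erase u) := by
    have heq : A = insert u (A.erase u) := (Finset.insert_erase huA).symm
    have h2 : Fv (insert u (A.erase u)) = u.1 + u.2 * Fv (A.erase u) :=
      Fv_insert_max hd hAeC huC (Finset.notMem_erase _ _)
        (fun x hx => humax x (Finset.mem_of_mem_erase hx) (Finset.ne_of_mem_erase hx))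
    rw [← heq] at h2
    exact h2
  refine ⟨⟨hAe_sub, by rw [Finset.card_erase_of_mem huA, hAcard]; simp, ?_⟩, hfv⟩
  intro Y hY hYcard
  have huY : u ∉ Y := fun h => (Finset.mem_erase.mp (hY h)).1 rfl
  have hYC : Y ⊆ C := hY.trans (Finset.erase_subset _ _)
  have hchain : u.1 + u.2 * Fv Y ≤ Fv A := by
    calc u.1 + u.2 * Fv Y ≤ Fv (insert u Y) := cons_le_Fv hC hd huC hYC huY
      _ ≤ Fv A := hAopt _ (Finset.insert_subset huC hYC)
        (by rw [Finset.card_insert_of_notMem huY, hYcard])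
  rw [hfv] at hchain
  exact le_of_mul_le_mul_left (by linarith [hchain]) hu'.2.1

set_option maxHeartbeats 2000000 in
lemma core (n : ℕ) : ∀ (C : Finset (ℝ × ℝ)), C.card ≤ n → Good C → Dist C →
    ∀ (k : ℕ) (S T : Finset (ℝ × ℝ)), OptF C k S → OptF C (k + 1) T →
    ∃ S', S ⊆ S' ∧ S' ⊆ C ∧ S'.card = k + 1 ∧ Fv T ≤ Fv S' := by
  induction n with
  | zero =>
    intro C hcard _ _ k S T _ hT
    have := (hT.2.1 ▸ Finset.card_le_card hT.1).trans hcard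
    omega
  | succ n IH =>
    intro C hcard hC hd k S T hS hT
    obtain ⟨hSC, hScard, hSopt⟩ := hS
    obtain ⟨hTC, hTcard, hTopt⟩ := hT
    by_cases hST : S ⊆ T
    · exact ⟨T, hST, hTC, hTcard, le_rfl⟩
    have hdne : ((S \ T) ∪ (T \ S)).Nonempty := by
      obtain ⟨x, hx1, hx2⟩ := Finset.not_subset.mp hST
      exact ⟨x, Finset.mem_union_left _ (Finset.mem_sdiff.mpr ⟨hx1, hx2⟩)⟩
    have hDC : (S \ T) ∪ (T \ S) ⊆ C := by
      intro x hx
      rcases Finset.mem_union.mp hx with h | h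
      · exact hSC (Finset.mem_sdiff.mp h).1
      · exact hTC (Finset.mem_sdiff.mp h).1
    obtain ⟨a, haD, haMax⟩ := Finset.exists_max_image _ rho hdne
    have haC : a ∈ C := hDC haD
    have ha' := hC a haC
    have hdifflt : ∀ x ∈ (S \ T) ∪ (T \ S), x ≠ a → rho x < rho a := fun x hx hne =>
      lt_of_le_of_ne (haMax x hx) (rho_ne hd (hDC hx) haC hne)
    have habove : ∀ x ∈ S ∪ T, rho a < rho x → x ∈ S ∧ x ∈ T := by
      intro x hx hlt
      have hxa : x ≠ a := fun h => absurd (h ▸ hlt) (lt_irrefl _)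
      rcases Finset.mem_union.mp hx with h | h
      · by_cases h2 : x ∈ T
        · exact ⟨h, h2⟩
        · exact absurd hlt (not_lt.mpr (le_of_lt (hdifflt x
            (Finset.mem_union_left _ (Finset.mem_sdiff.mpr ⟨h, h2⟩)) hxa)))
      · by_cases h2 : x ∈ S
        · exact ⟨h2, h⟩
        · exact absurd hlt (not_lt.mpr (le_of_lt (hdifflt x
            (Finset.mem_union_right _ (Finset.mem_sdiff.mpr ⟨h, h2⟩)) hxa)))
    rcases Finset.mem_union.mp haD with haST | haTS
    · -- Case B : a ∈ S \ T
      obtain ⟨haS, haT⟩ := Finset.mem_sdiff.mp haST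
      obtain ⟨m, rfl⟩ : ∃ m, k = m + 1 := by
        refine ⟨k - 1, ?_⟩
        have hk0 : k ≠ 0 := by
          rintro rfl
          rw [Finset.card_eq_zero] at hScard
          exact absurd (hScard ▸ haS) (Finset.notMem_empty a)
        omega
      set U := S.filter (fun x => rho a < rho x) with hUdef
      have hUsub : U ⊆ C := (Finset.filter_subset _ _).trans hSC
      by_cases hUne : U.Nonempty
      · -- B1 : strip top common element u
        obtain ⟨u, huU, humax⟩ := Finset.exists_max_image U rho hUne
        have huS : u ∈ S := (Finset.filter_subset _ _) huU
        have hua : rho a < rho u := (Finset.mem_filter.mp huU).2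
        have huT : u ∈ T := (habove u (Finset.mem_union_left _ huS) hua).2
        have huC : u ∈ C := hSC huS
        have hutop : ∀ x ∈ S ∪ T, x ≠ u → rho x < rho u := by
          intro x hx hne
          have hxC : x ∈ C := by
            rcases Finset.mem_union.mp hx with h | h
            · exact hSC h
            · exact hTC h
          rcases lt_trichotomy (rho x) (rho a) with h | h | h
          · exact lt_trans h hua
          · exact (rho_inj hd hxC haC h) ▸ hua
          · have hxST := habove x hx h
            have hxU : x ∈ U := Finset.mem_filter.mpr ⟨hxST.1, h⟩
            exact lt_of_le_of_ne (humax x hxU) (rho_ne hd hxC huC hne)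
        have hSopt' := opt_erase hC hd (j := m) ⟨hSC, hScard, hSopt⟩ huS
          (fun x hx hne => hutop x (Finset.mem_union_left _ hx) hne)
        have hTopt' := opt_erase hC hd (j := m + 1) ⟨hTC, hTcard, hTopt⟩ huT
          (fun x hx hne => hutop x (Finset.mem_union_right _ hx) hne)
        have hcard' : (C.erase u).card ≤ n := by
          rw [Finset.card_erase_of_mem huC]; omega
        obtain ⟨W, hW1, hW2, hW3, hW4⟩ := IH (C.erase u) hcard'
          (good_subset hC (Finset.erase_subset _ _)) (dist_subset hd (Finset.erase_subset _ _))
          m (S.erase u) (T.erase u) hSopt'.1 hTopt'.1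
        have hWC : W ⊆ C := hW2.trans (Finset.erase_subset _ _)
        have huW : u ∉ W := fun h => (Finset.mem_erase.mp (hW2 h)).1 rfl
        refine ⟨insert u W, ?_, Finset.insert_subset huC hWC, ?_, ?_⟩
        · intro x hx
          by_cases hxu : x = u
          · exact hxu ▸ Finset.mem_insert_self _ _
          · exact Finset.mem_insert_of_mem (hW1 (Finset.mem_erase.mpr ⟨hxu, hx⟩))
        · rw [Finset.card_insert_of_notMem huW, hW3]
        · calc Fv T = u.1 + u.2 * Fv (T.erase u) := hTopt'.2
            _ ≤ u.1 + u.2 * Fv W := by nlinarith [hW4, (hC u huC).2.1]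
            _ ≤ Fv (insert u W) := cons_le_Fv hC hd huC hWC huW
      · -- B2 : U empty
        have hUempty : U = ∅ := Finset.not_nonempty_iff_eq_empty.mp hUne
        have hnotU : ∀ x, x ∉ U := fun x h => absurd (hUempty ▸ h) (Finset.notMem_empty x)
        have hbS : ∀ x ∈ S, x ≠ a → rho x < rho a := by
          intro x hx hne
          rcases lt_trichotomy (rho x) (rho a) with h | h | h
          · exact h
          · exact absurd (rho_inj hd (hSC hx) haC h) hne
          · exact absurd (Finset.mem_filter.mpr ⟨hx, h⟩) (hnotU x)
        have hbT : ∀ x ∈ T, rho x < rho a := by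
          intro x hx
          rcases lt_trichotomy (rho x) (rho a) with h | h | h
          · exact h
          · exact absurd ((rho_inj hd (hTC hx) haC h) ▸ hx) haT
          · exact absurd (Finset.mem_filter.mpr ⟨(habove x (Finset.mem_union_right _ hx) h).1, h⟩)
              (hnotU x)
        by_cases hCsub : C ⊆ S ∪ T
        · -- C = S ∪ T : main construction
          have hamaxC : ∀ x ∈ C, x ≠ a → rho x < rho a := by
            intro x hx hne
            rcases Finset.mem_union.mp (hCsub hx) with h | h
            · exact hbS x h hne
            · exact hbT x h
          have hcard₀ : (C.erase a).card ≤ n := by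
            rw [Finset.card_erase_of_mem haC]; omega
          have hC₀g : Good (C.erase a) := good_subset hC (Finset.erase_subset _ _)
          have hd₀ : Dist (C.erase a) := dist_subset hd (Finset.erase_subset _ _)
          have hSopt₂ := opt_erase hC hd (j := m) ⟨hSC, hScard, hSopt⟩ haS
            (fun x hx hne => hamaxC x (hSC hx) hne)
          set S₂ := S.erase a with hS₂def
          have hS₂C : S₂ ⊆ C := (Finset.erase_subset _ _).trans hSC
          have hS₂card : S₂.card = m := by
            rw [hS₂def, Finset.card_erase_of_mem haS, hScard]; simp
          have hTC₀ : T ⊆ C.erase a :=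
            fun x hx => Finset.mem_erase.mpr ⟨fun h => haT (h ▸ hx), hTC hx⟩
          have hTopt₀ : OptF (C.erase a) (m + 1 + 1) T :=
            ⟨hTC₀, hTcard, fun B hB hBc => hTopt B (hB.trans (Finset.erase_subset _ _)) hBc⟩
          have hsz : m + 1 ≤ (C.erase a).card := by
            have := Finset.card_le_card hTC₀
            omega
          obtain ⟨T₁, hT₁⟩ := exists_optF (C.erase a) (m + 1) hsz
          obtain ⟨W', hW'1, hW'2, hW'3, hW'4⟩ := IH (C.erase a) hcard₀ hC₀g hd₀
            m S₂ T₁ hSopt₂.1 hT₁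
          have hW'opt : OptF (C.erase a) (m + 1) W' :=
            ⟨hW'2, hW'3, fun B hB hBc => (hT₁.2.2 B hB hBc).trans hW'4⟩
          obtain ⟨W'', hW''1, hW''2, hW''3, hW''4⟩ := IH (C.erase a) hcard₀ hC₀g hd₀
            (m + 1) W' T hW'opt hTopt₀
          have hS₂W'' : S₂ ⊆ W'' := hW'1.trans hW''1
          have hW''C : W'' ⊆ C := hW''2.trans (Finset.erase_subset _ _)
          have hcard2 : (W'' \ S₂).card = 2 := by
            rw [Finset.card_sdiff_of_subset hS₂W'', hW''3, hS₂card]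
            omega
          obtain ⟨x₀, y₀, hxy₀, hset₀⟩ := Finset.card_eq_two.mp hcard2
          have hx₀C : x₀ ∈ C := hW''C (Finset.mem_sdiff.mp (hset₀ ▸ (by simp : x₀ ∈ ({x₀, y₀} : Finset (ℝ × ℝ))))).1
          have hy₀C : y₀ ∈ C := hW''C (Finset.mem_sdiff.mp (hset₀ ▸ (by simp : y₀ ∈ ({x₀, y₀} : Finset (ℝ × ℝ))))).1
          obtain ⟨c, d, hdc, hset2⟩ : ∃ c d, rho d < rho c ∧ W'' \ S₂ = {c, d} := by
            rcases lt_or_gt_of_ne (rho_ne hd hx₀C hy₀C hxy₀) with h | h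
            · exact ⟨y₀, x₀, h, hset₀.trans (Finset.pair_comm x₀ y₀)⟩
            · exact ⟨x₀, y₀, h, hset₀⟩
          have hcmem : c ∈ W'' \ S₂ := by rw [hset2]; simp
          have hdmem : d ∈ W'' \ S₂ := by rw [hset2]; simp
          have hcW : c ∈ W'' := (Finset.mem_sdiff.mp hcmem).1
          have hdW : d ∈ W'' := (Finset.mem_sdiff.mp hdmem).1
          have hcS₂ : c ∉ S₂ := (Finset.mem_sdiff.mp hcmem).2
          have hdS₂ : d ∉ S₂ := (Finset.mem_sdiff.mp hdmem).2
          have hcC : c ∈ C := hW''C hcW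
          have hdC : d ∈ C := hW''C hdW
          have hca : c ≠ a := fun h => (Finset.mem_erase.mp (hW''2 hcW)).1 h
          have hda : d ≠ a := fun h => (Finset.mem_erase.mp (hW''2 hdW)).1 h
          have hcd_ne : c ≠ d := fun h => absurd (h ▸ hdc) (lt_irrefl _)
          have hW''dec : W'' = S₂ ∪ {c, d} := by
            rw [← hset2, Finset.union_sdiff_of_subset hS₂W'']
          -- decompose sortF S₂
          have hLsorted : SortedR (sortF S₂) := sortF_sorted hd hS₂C
          have hmemL : ∀ z ∈ sortF S₂, z ∈ S₂ := fun z hz => mem_sortF.mp hz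
          obtain ⟨A, Z, hAZ, hAb, hZb⟩ := split_at hLsorted (rho c)
            (fun z hz => rho_ne hd (hS₂C (hmemL z hz)) hcC
              (fun he => hcS₂ (he ▸ hmemL z hz)))
          have hZsorted : SortedR Z := by
            have h := hLsorted
            rw [hAZ] at h
            exact (List.pairwise_append.mp h).2.1
          have hZsub : ∀ z ∈ Z, z ∈ S₂ := fun z hz => hmemL z (by rw [hAZ]; exact List.mem_append_right _ hz)
          have hAsub : ∀ z ∈ A, z ∈ S₂ := fun z hz => hmemL z (by rw [hAZ]; exact List.mem_append_left _ hz)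
          obtain ⟨B, D, hBD, hBb, hDb⟩ := split_at hZsorted (rho d)
            (fun z hz => rho_ne hd (hS₂C (hZsub z hz)) hdC
              (fun he => hdS₂ (he ▸ hZsub z hz)))
          have hBsub : ∀ z ∈ B, z ∈ S₂ := fun z hz => hZsub z (by rw [hBD]; exact List.mem_append_left _ hz)
          have hDsub : ∀ z ∈ D, z ∈ S₂ := fun z hz => hZsub z (by rw [hBD]; exact List.mem_append_right _ hz)
          have hBlt : ∀ z ∈ B, rho z < rho c := fun z hz => hZb z (by rw [hBD]; exact List.mem_append_left _ hz)
          have hDlt : ∀ z ∈ D, rho z < rho c := fun z hz => hZb z (by rw [hBD]; exact List.mem_append_right _ hz)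
          have hLeq : sortF S₂ = A ++ (B ++ D) := by rw [hAZ, hBD]
          -- the candidate sorted list for W''
          have hlt_c : ∀ y ∈ B ++ (d :: D), rho y < rho c := by
            intro y hy
            rcases List.mem_append.mp hy with h | h
            · exact hBlt y h
            · rcases List.mem_cons.mp h with rfl | h2
              · exact hdc
              · exact hDlt y h2
          have hBsorted : SortedR B := by
            have h := hZsorted; rw [hBD] at h; exact (List.pairwise_append.mp h).1
          have hDsorted : SortedR D := by
            have h := hZsorted; rw [hBD] at h; exact (List.pairwise_append.mp h).2.1
          have hAsorted : SortedR A := by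
            have h := hLsorted; rw [hAZ] at h; exact (List.pairwise_append.mp h).1
          have hMtail : SortedR (B ++ (d :: D)) := by
            rw [SortedR, List.pairwise_append]
            refine ⟨hBsorted, List.pairwise_cons.mpr ⟨fun y hy => hDb y hy, hDsorted⟩, ?_⟩
            intro z hz y hy
            rcases List.mem_cons.mp hy with rfl | h2
            · exact hBb z hz
            · exact lt_trans (hDb y h2) (hBb z hz)
          have hMsorted : SortedR (A ++ (c :: (B ++ (d :: D)))) := by
            rw [SortedR, List.pairwise_append]
            refine ⟨hAsorted, List.pairwise_cons.mpr ⟨hlt_c, hMtail⟩, ?_⟩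
            intro z hz y hy
            rcases List.mem_cons.mp hy with rfl | h2
            · exact hAb z hz
            · exact lt_trans (hlt_c y h2) (hAb z hz)
          have hMnodup : (A ++ (c :: (B ++ (d :: D)))).Nodup :=
            hMsorted.imp (fun h => fun he => absurd (he ▸ h) (lt_irrefl _))
          have hmemM_iff : ∀ z, z ∈ A ++ (c :: (B ++ (d :: D))) ↔ z ∈ S₂ ∨ z = c ∨ z = d := by
            intro z
            have hiff : z ∈ S₂ ↔ z ∈ A ∨ z ∈ B ∨ z ∈ D := by
              rw [← mem_sortF (A := S₂), hLeq]
              simp [List.mem_append]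
            simp only [List.mem_append, List.mem_cons]
            rw [hiff]
            tauto
          have hMtoF : (A ++ (c :: (B ++ (d :: D)))).toFinset = W'' := by
            ext z
            rw [List.mem_toFinset, hmemM_iff z, hW''dec]
            simp only [Finset.mem_union, Finset.mem_insert, Finset.mem_singleton]
          have hperm : (A ++ (c :: (B ++ (d :: D)))) ~ W''.toList :=
            List.perm_of_nodup_nodup_toFinset_eq hMnodup (Finset.nodup_toList _)
              (by rw [hMtoF, Finset.toList_toFinset])
          have hFvW'' : Fv W'' = eff (A ++ (c :: (B ++ (d :: D)))) :=
            Fv_eq_eff hd hW''C hMsorted hperm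
          -- O1 inequality
          have hL₁sub : (A ++ (B ++ (d :: D))) <+ (A ++ (c :: (B ++ (d :: D)))) :=
            (List.sublist_cons_self c (B ++ (d :: D))).append_left A
          have hL₁nodup : (A ++ (B ++ (d :: D))).Nodup := hMnodup.sublist hL₁sub
          have hL₁mem : ∀ z ∈ A ++ (B ++ (d :: D)), z ∈ C := by
            intro z hz
            rcases List.mem_append.mp hz with h | h
            · exact hS₂C (hAsub z h)
            · rcases List.mem_append.mp h with h2 | h2
              · exact hS₂C (hBsub z h2)
              · rcases List.mem_cons.mp h2 with rfl | h3
                · exact hdC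
                · exact hS₂C (hDsub z h3)
          have hL₁toF : (A ++ (B ++ (d :: D))).toFinset = insert d S₂ := by
            ext z
            have hiff : z ∈ S₂ ↔ z ∈ A ∨ z ∈ B ∨ z ∈ D := by
              rw [← mem_sortF (A := S₂), hLeq]
              simp [List.mem_append]
            rw [List.mem_toFinset]
            simp only [List.mem_append, List.mem_cons, Finset.mem_insert]
            rw [hiff]
            tauto
          have hstep : eff (A ++ (B ++ (d :: D))) ≤ Fv (insert d S₂) := by
            have h := eff_le_Fv hC hd hL₁mem hL₁nodup
            rwa [hL₁toF] at h
          have hstep2 : Fv (insert d S₂) ≤ Fv S := by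
            apply hSopt _ (Finset.insert_subset hdC hS₂C)
            rw [Finset.card_insert_of_notMem hdS₂, hS₂card]
          have hFvS : Fv S = a.1 + a.2 * Fv S₂ := hSopt₂.2
          have hFvS₂ : Fv S₂ = eff (A ++ (B ++ D)) := by rw [Fv, hLeq]
          have hO1 : eff (A ++ (B ++ (d :: D))) ≤ a.1 + a.2 * eff (A ++ (B ++ D)) := by
            rw [← hFvS₂, ← hFvS]
            exact hstep.trans hstep2
          -- apply the key lemma
          have hgA : GoodL A := fun z hz => hC z (hS₂C (hAsub z hz))
          have hgB : GoodL B := fun z hz => hC z (hS₂C (hBsub z hz))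
          have hbA : ∀ z ∈ A, rho z ≤ rho a := by
            intro z hz
            exact le_of_lt (hamaxC z (hS₂C (hAsub z hz))
              (Finset.ne_of_mem_erase (hAsub z hz)))
          have hbc : rho c ≤ rho a := le_of_lt (hamaxC c hcC hca)
          have hkey := key_lemma hgA hgB ha' (hC c hcC) hbA hbc hO1
          -- assemble final set
          have hNsub : (A ++ (c :: (B ++ D))) <+ (A ++ (c :: (B ++ (d :: D)))) :=
            (((List.sublist_cons_self d D).append_left B).cons₂ c).append_left A
          have hNnodup : (A ++ (c :: (B ++ D))).Nodup := hMnodup.sublist hNsub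
          have hNmem_iff : ∀ z, z ∈ A ++ (c :: (B ++ D)) ↔ z ∈ S₂ ∨ z = c := by
            intro z
            have hiff : z ∈ S₂ ↔ z ∈ A ∨ z ∈ B ∨ z ∈ D := by
              rw [← mem_sortF (A := S₂), hLeq]
              simp [List.mem_append]
            simp only [List.mem_append, List.mem_cons]
            rw [hiff]
            tauto
          have haN : a ∉ (A ++ (c :: (B ++ D))) := by
            intro h
            rcases (hNmem_iff a).mp h with h2 | h2
            · exact (Finset.mem_erase.mp h2).1 rfl
            · exact hca h2.symm
          have haNnodup : (a :: (A ++ (c :: (B ++ D)))).Nodup :=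
            List.nodup_cons.mpr ⟨haN, hNnodup⟩
          have haNmem : ∀ z ∈ a :: (A ++ (c :: (B ++ D))), z ∈ C := by
            intro z hz
            rcases List.mem_cons.mp hz with rfl | h
            · exact haC
            · rcases (hNmem_iff z).mp h with h2 | h2
              · exact hS₂C h2
              · exact h2 ▸ hcC
          have haNtoF : (a :: (A ++ (c :: (B ++ D)))).toFinset = insert a (insert c S₂) := by
            ext z
            rw [List.mem_toFinset]
            simp only [List.mem_cons, Finset.mem_insert]
            rw [hNmem_iff z]
            tauto
          have hfinal : eff (a :: (A ++ (c :: (B ++ D)))) ≤ Fv (insert a (insert c S₂)) := by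
            have h := eff_le_Fv hC hd haNmem haNnodup
            rwa [haNtoF] at h
          have haicS₂ : a ∉ insert c S₂ := by
            intro h
            rcases Finset.mem_insert.mp h with h2 | h2
            · exact hca h2.symm
            · exact (Finset.mem_erase.mp h2).1 rfl
          refine ⟨insert a (insert c S₂), ?_, ?_, ?_, ?_⟩
          · intro z hz
            by_cases hza : z = a
            · exact hza ▸ Finset.mem_insert_self _ _
            · exact Finset.mem_insert_of_mem (Finset.mem_insert_of_mem
                (Finset.mem_erase.mpr ⟨hza, hz⟩))
          · exact Finset.insert_subset haC (Finset.insert_subset hcC hS₂C)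
          · rw [Finset.card_insert_of_notMem haicS₂, Finset.card_insert_of_notMem hcS₂,
              hS₂card]
          · calc Fv T ≤ Fv W'' := hW''4
              _ = eff (A ++ (c :: (B ++ (d :: D)))) := hFvW''
              _ ≤ a.1 + a.2 * eff (A ++ (c :: (B ++ D))) := hkey
              _ = eff (a :: (A ++ (c :: (B ++ D)))) := (eff_cons _ _).symm
              _ ≤ Fv (insert a (insert c S₂)) := hfinal
        · -- C ≠ S ∪ T : recurse on the smaller universe S ∪ T
          have hsub : S ∪ T ⊆ C := Finset.union_subset hSC hTC
          have hne : S ∪ T ≠ C := fun h => hCsub (h ▸ Finset.Subset.refl _)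
          have hlt : (S ∪ T).card < C.card :=
            Finset.card_lt_card (Finset.ssubset_iff_subset_ne.mpr ⟨hsub, hne⟩)
          obtain ⟨S', h1', h2', h3', h4'⟩ := IH (S ∪ T) (by omega)
            (good_subset hC hsub) (dist_subset hd hsub) (m + 1) S T
            ⟨Finset.subset_union_left, hScard,
              fun B hB hBc => hSopt B (hB.trans hsub) hBc⟩
            ⟨Finset.subset_union_right, hTcard,
              fun B hB hBc => hTopt B (hB.trans hsub) hBc⟩
          exact ⟨S', h1', h2'.trans hsub, h3', h4'⟩
    · -- Case A : a ∈ T \ S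
      obtain ⟨haT, haS⟩ := Finset.mem_sdiff.mp haTS
      classical
      set U := S.filter (fun x => rho a < rho x) with hUdef
      set S₂ := S.filter (fun x => rho x < rho a) with hS₂def
      set T₂ := T.filter (fun x => rho x < rho a) with hT₂def
      have hUsub : U ⊆ C := (Finset.filter_subset _ _).trans hSC
      have hS₂sub : S₂ ⊆ C := (Finset.filter_subset _ _).trans hSC
      have hT₂sub : T₂ ⊆ C := (Finset.filter_subset _ _).trans hTC
      have haU : a ∉ U := by simp [hUdef]
      have haS₂ : a ∉ S₂ := by simp [hS₂def, haS]
      have haT₂ : a ∉ T₂ := by simp [hT₂def]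
      have hUbound' : ∀ x ∈ U, rho a < rho x := fun x hx => (Finset.mem_filter.mp hx).2
      have hSdec : S = U ∪ S₂ := by
        ext x
        simp only [hUdef, hS₂def, Finset.mem_union, Finset.mem_filter]
        constructor
        · intro hxS
          rcases lt_trichotomy (rho x) (rho a) with h | h | h
          · exact Or.inr ⟨hxS, h⟩
          · exact absurd (rho_inj hd (hSC hxS) haC h) (fun he => haS (he ▸ hxS))
          · exact Or.inl ⟨hxS, h⟩
        · rintro (⟨h, _⟩ | ⟨h, _⟩) <;> exact h
      have hTdec : T = U ∪ insert a T₂ := by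
        ext x
        simp only [hUdef, hT₂def, Finset.mem_union, Finset.mem_filter, Finset.mem_insert]
        constructor
        · intro hxT
          rcases lt_trichotomy (rho x) (rho a) with h | h | h
          · exact Or.inr (Or.inr ⟨hxT, h⟩)
          · exact Or.inr (Or.inl (rho_inj hd (hTC hxT) haC h))
          · exact Or.inl ⟨(habove x (Finset.mem_union_right _ hxT) h).1, h⟩
        · rintro (⟨hxS, hlt⟩ | rfl | ⟨h, _⟩)
          · exact (habove x (Finset.mem_union_left _ hxS) hlt).2
          · exact haT
          · exact h
      have hUbound : ∀ x ∈ U, rho a < rho x := fun x hx => (Finset.mem_filter.mp hx).2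
      have hS₂bound : ∀ x ∈ S₂, rho x < rho a := fun x hx => (Finset.mem_filter.mp hx).2
      have hT₂bound : ∀ x ∈ T₂, rho x < rho a := fun x hx => (Finset.mem_filter.mp hx).2
      have h1 : sortF S = sortF U ++ sortF S₂ := by
        conv_lhs => rw [hSdec]
        exact sortF_split hd hUsub hS₂sub
          (fun x hx y hy => lt_trans (hS₂bound y hy) (hUbound x hx))
      have hiS₂ : insert a S₂ ⊆ C := Finset.insert_subset haC hS₂sub
      have hiT₂ : insert a T₂ ⊆ C := Finset.insert_subset haC hT₂sub
      have h2 : sortF T = sortF U ++ (a :: sortF T₂) := by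
        conv_lhs => rw [hTdec]
        rw [sortF_split hd hUsub hiT₂ ?cross, sortF_insert_max hd hT₂sub haC haT₂ hT₂bound]
        case cross =>
          intro x hx y hy
          rcases Finset.mem_insert.mp hy with rfl | hy2
          · exact hUbound x hx
          · exact lt_trans (hT₂bound y hy2) (hUbound x hx)
      have h3 : sortF (insert a S) = sortF U ++ (a :: sortF S₂) := by
        have he : insert a S = U ∪ insert a S₂ := by
          rw [hSdec, Finset.union_comm U S₂, ← Finset.insert_union,
            Finset.union_comm _ U]
        rw [he, sortF_split hd hUsub hiS₂ ?cross2,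
          sortF_insert_max hd hS₂sub haC haS₂ hS₂bound]
        case cross2 =>
          intro x hx y hy
          rcases Finset.mem_insert.mp hy with rfl | hy2
          · exact hUbound x hx
          · exact lt_trans (hS₂bound y hy2) (hUbound x hx)
      have h4 : sortF (T.erase a) = sortF U ++ sortF T₂ := by
        have he : T.erase a = U ∪ T₂ := by
          rw [hTdec]
          ext x
          simp only [Finset.mem_erase, Finset.mem_union, Finset.mem_insert]
          constructor
          · rintro ⟨hne, h | h⟩
            · exact Or.inl h
            · rcases h with rfl | h
              · exact absurd rfl hne
              · exact Or.inr h
          · rintro (h | h)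
            · exact ⟨fun he => haU (he ▸ h), Or.inl h⟩
            · exact ⟨fun he => haT₂ (he ▸ h), Or.inr (Or.inr h)⟩
        rw [he]
        exact sortF_split hd hUsub hT₂sub
          (fun x hx y hy => lt_trans (hT₂bound y hy) (hUbound x hx))
      have hcomp : Fv (T.erase a) ≤ Fv S := by
        apply hSopt _ ((Finset.erase_subset _ _).trans hTC)
        rw [Finset.card_erase_of_mem haT, hTcard]
        simp
      have hqU : 0 < qprod (sortF U) := qprod_pos (goodL_sortF hC hUsub)
      refine ⟨insert a S, Finset.subset_insert _ _, Finset.insert_subset haC hSC,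
        by rw [Finset.card_insert_of_notMem haS, hScard], ?_⟩
      have e1 : Fv T = eff (sortF U) + qprod (sortF U) * (a.1 + a.2 * eff (sortF T₂)) := by
        rw [Fv, h2, eff_append, eff_cons]
      have e2 : Fv (insert a S) =
          eff (sortF U) + qprod (sortF U) * (a.1 + a.2 * eff (sortF S₂)) := by
        rw [Fv, h3, eff_append, eff_cons]
      have e3 : Fv (T.erase a) = eff (sortF U) + qprod (sortF U) * eff (sortF T₂) := by
        rw [Fv, h4, eff_append]
      have e4 : Fv S = eff (sortF U) + qprod (sortF U) * eff (sortF S₂) := by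
        rw [Fv, h1, eff_append]
      rw [e1, e2]
      rw [e3, e4] at hcomp
      have hT₂S₂ : eff (sortF T₂) ≤ eff (sortF S₂) :=
        le_of_mul_le_mul_left (by linarith) hqU
      have := mul_le_mul_of_nonneg_left hT₂S₂ (le_of_lt ha'.2.1)
      nlinarith [hqU]


end SubsetAux

open SubsetAux

/-- Theorem 3 (subset structure): for any optimal assignment `S` of `j−1` slots from a
finite bidder set `C` (bidders with `e > 0`, `q ∈ (0,1)`, pairwise distinct adjusted
ecpms), there is an optimal assignment `S'` of `j` slots whose bidder set strictly
contains that of `S`. -/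
theorem subset_structure
    (C : Finset (ℝ × ℝ))
    (hC : ∀ a ∈ C, 0 < a.1 ∧ 0 < a.2 ∧ a.2 < 1)
    (hdistinct : ∀ a ∈ C, ∀ b ∈ C, a.1 / (1 - a.2) = b.1 / (1 - b.2) → a = b)
    (j : ℕ) (hj1 : 1 ≤ j) (hjC : j ≤ C.card)
    (S : List (ℝ × ℝ))
    (hSnd : S.Nodup) (hSmem : ∀ a ∈ S, a ∈ C) (hSlen : S.length = j - 1)
    (hSopt : ∀ T : List (ℝ × ℝ), T.Nodup → (∀ a ∈ T, a ∈ C) →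
      T.length = j - 1 → eff T ≤ eff S) :
    ∃ S' : List (ℝ × ℝ), S'.Nodup ∧ (∀ a ∈ S', a ∈ C) ∧ S'.length = j ∧
      (∀ T : List (ℝ × ℝ), T.Nodup → (∀ a ∈ T, a ∈ C) →
        T.length = j → eff T ≤ eff S') ∧
      S.toFinset ⊂ S'.toFinset := by
  classical
  have hg : SubsetAux.Good C := hC
  have hd : SubsetAux.Dist C := hdistinct
  have hSsub : S.toFinset ⊆ C := fun x hx => hSmem x (List.mem_toFinset.mp hx)
  have hScard : S.toFinset.card = j - 1 := by
    rw [List.toFinset_card_of_nodup hSnd, hSlen]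
  have hSopt' : OptF C (j - 1) S.toFinset := by
    refine ⟨hSsub, hScard, ?_⟩
    intro B hB hBc
    calc Fv B = eff (sortF B) := rfl
      _ ≤ eff S := hSopt _ (sortF_nodup _) (fun x hx => hB (mem_sortF.mp hx))
          (by rw [length_sortF, hBc])
      _ ≤ Fv S.toFinset := eff_le_Fv hg hd hSmem hSnd
  obtain ⟨Topt, hTopt⟩ := exists_optF C j hjC
  have hj' : j - 1 + 1 = j := Nat.succ_pred_eq_of_pos hj1
  obtain ⟨S', h1, h2, h3, h4⟩ := core C.card C le_rfl hg hd (j - 1) S.toFinset Topt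
    hSopt' (by rw [hj']; exact hTopt)
  refine ⟨sortF S', sortF_nodup _, fun x hx => h2 (mem_sortF.mp hx),
    by rw [length_sortF, h3, hj'], ?_, ?_⟩
  · intro T hTnd hTmem hTlen
    calc eff T ≤ Fv T.toFinset := eff_le_Fv hg hd hTmem hTnd
      _ ≤ Fv Topt := hTopt.2.2 _ (fun x hx => hTmem x (List.mem_toFinset.mp hx))
          (by rw [List.toFinset_card_of_nodup hTnd, hTlen])
      _ ≤ Fv S' := h4
      _ = eff (sortF S') := rfl
  · rw [toFinset_sortF]
    refine Finset.ssubset_iff_subset_ne.mpr ⟨h1, ?_⟩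
    intro he
    rw [← he] at h3
    rw [hScard] at h3
    omega
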